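/- Let W be a matrix A_p weight on ℝ with 1 < p ≤ 2, and for each interval I let V_I be a reducing operator, i.e., |I|^{−1/p}‖1_I W^{1/p} e‖_{L^p} ≈ |V_I e| for all e ∈ ℂ^n. Define w_I(t) = ‖V_I^{−1} W^{1/p}(t)‖. Then W satisfies the B_{2,p} condition: sup_I |I| ∫_{ℝ \ I} w_I(t)/|t − c_I|² dt < ∞, where c_I is the center of I. -/

import Mathlib

open MeasureTheory
open scoped ENNReal NNReal
open scoped ComplexOrder

noncomputable def opN {n : ℕ} (A : Matrix (Fin n) (Fin n) ℂ) : ℝ :=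
  ‖Matrix.toEuclideanCLM (𝕜 := ℂ) A‖

noncomputable def eN {n : ℕ} (v : Fin n → ℂ) : ℝ :=
  Real.sqrt (∑ i, ‖v i‖ ^ 2)

namespace B2p

lemma eN_eq_norm {n : ℕ} (v : Fin n → ℂ) :
    eN v = ‖(WithLp.equiv 2 (Fin n → ℂ)).symm v‖ := by
  rw [eN, EuclideanSpace.norm_eq]; rfl

lemma eN_nonneg {n : ℕ} (v : Fin n → ℂ) : 0 ≤ eN v := Real.sqrt_nonneg _

lemma opN_nonneg {n : ℕ} (A : Matrix (Fin n) (Fin n) ℂ) : 0 ≤ opN A := norm_nonneg _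

lemma toCLM_apply {n : ℕ} (A : Matrix (Fin n) (Fin n) ℂ) (v : Fin n → ℂ) :
    Matrix.toEuclideanCLM (𝕜 := ℂ) A ((WithLp.equiv 2 _).symm v)
      = (WithLp.equiv 2 _).symm (A.mulVec v) := by
  exact Matrix.toEuclideanCLM_toLp A v

lemma eN_mulVec_le {n : ℕ} (A : Matrix (Fin n) (Fin n) ℂ) (v : Fin n → ℂ) :
    eN (A.mulVec v) ≤ opN A * eN v := by
  rw [eN_eq_norm, eN_eq_norm, ← toCLM_apply]
  exact ContinuousLinearMap.le_opNorm _ _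

lemma opN_mul_le {n : ℕ} (A B : Matrix (Fin n) (Fin n) ℂ) :
    opN (A * B) ≤ opN A * opN B := by
  rw [opN, opN, opN, map_mul]
  exact norm_mul_le _ _

lemma opN_conjTranspose {n : ℕ} (A : Matrix (Fin n) (Fin n) ℂ) : opN A.conjTranspose = opN A := by
  rw [opN, opN, ← Matrix.star_eq_conjTranspose, map_star,
    ContinuousLinearMap.star_eq_adjoint]
  exact LinearIsometryEquiv.norm_map ContinuousLinearMap.adjoint _

lemma eN_coord_le {n : ℕ} (v : Fin n → ℂ) (j : Fin n) : ‖v j‖ ≤ eN v := by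
  rw [eN]
  have h1 : ‖v j‖ ^ 2 ≤ ∑ i, ‖v i‖ ^ 2 :=
    Finset.single_le_sum (f := fun i => ‖v i‖ ^ 2) (fun i _ => sq_nonneg _) (Finset.mem_univ j)
  calc ‖v j‖ = Real.sqrt (‖v j‖ ^ 2) := by rw [Real.sqrt_sq (norm_nonneg _)]
  _ ≤ _ := Real.sqrt_le_sqrt h1

lemma opN_le_sum {n : ℕ} (A : Matrix (Fin n) (Fin n) ℂ) :
    opN A ≤ ∑ j, eN (A.mulVec (Pi.single j 1)) := by
  refine ContinuousLinearMap.opNorm_le_bound _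
    (Finset.sum_nonneg fun j _ => eN_nonneg _) fun x => ?_
  set L := (WithLp.linearEquiv 2 ℂ (Fin n → ℂ)).symm with hL
  set y : Fin n → ℂ := WithLp.equiv 2 _ x with hy
  have hx : x = L y := rfl
  have hyd : y = ∑ j, y j • (Pi.single j 1 : Fin n → ℂ) := by
    ext i
    simp [Pi.single_apply, Finset.sum_apply]
  have hdec : A.mulVec y = ∑ j, y j • A.mulVec (Pi.single j 1) := by
    conv_lhs => rw [hyd, ← Matrix.mulVecLin_apply, map_sum]
    exact Finset.sum_congr rfl fun j _ => by simp [Matrix.mulVecLin_apply, Matrix.mulVec_smul]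
  have hTx : Matrix.toEuclideanCLM (𝕜 := ℂ) A x = L (A.mulVec y) := by
    rw [hx]; exact toCLM_apply A y
  rw [hTx, hdec, map_sum]
  calc ‖∑ j, L (y j • A.mulVec (Pi.single j 1))‖
      ≤ ∑ j, ‖L (y j • A.mulVec (Pi.single j 1))‖ := norm_sum_le _ _
  _ ≤ ∑ j, eN (A.mulVec (Pi.single j 1)) * ‖x‖ := by
      refine Finset.sum_le_sum fun j _ => ?_
      rw [_root_.map_smul, norm_smul]
      have h1 : ‖y j‖ ≤ ‖x‖ := by
        have := eN_coord_le y j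
        rwa [eN_eq_norm] at this
      have h2 : ‖L (A.mulVec (Pi.single j 1))‖ = eN (A.mulVec (Pi.single j 1)) :=
        (eN_eq_norm _).symm
      rw [h2, mul_comm]
      exact mul_le_mul_of_nonneg_left h1 (eN_nonneg _)
  _ = (∑ j, eN (A.mulVec (Pi.single j 1))) * ‖x‖ := (Finset.sum_mul _ _ _).symm

lemma eN_pos {n : ℕ} {v : Fin n → ℂ} (hv : v ≠ 0) : 0 < eN v := by
  rw [eN_eq_norm]
  simpa using hv

lemma eN_single {n : ℕ} (j : Fin n) : eN (Pi.single j 1 : Fin n → ℂ) = 1 := by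
  rw [eN]
  have : ∑ i, ‖(Pi.single j 1 : Fin n → ℂ) i‖ ^ 2 = 1 := by
    rw [Fintype.sum_eq_single j]
    · simp
    · intro i hi; simp [Pi.single_apply, hi]
  rw [this, Real.sqrt_one]

lemma mulVec_ne_zero {n : ℕ} {A : Matrix (Fin n) (Fin n) ℂ} (hA : A.PosDef)
    {v : Fin n → ℂ} (hv : v ≠ 0) : A.mulVec v ≠ 0 := by
  intro h
  have := hA.dotProduct_mulVec_pos hv
  rw [h] at this
  simp [dotProduct_zero] at this

lemma opN_continuous (n : ℕ) : Continuous (opN (n := n)) := by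
  have : Continuous (fun A : Matrix (Fin n) (Fin n) ℂ => Matrix.toEuclideanCLM (𝕜 := ℂ) A) := by
    let L : Matrix (Fin n) (Fin n) ℂ →ₗ[ℂ]
        (EuclideanSpace ℂ (Fin n) →L[ℂ] EuclideanSpace ℂ (Fin n)) :=
      { toFun := fun A => Matrix.toEuclideanCLM (𝕜 := ℂ) A
        map_add' := fun A B => map_add _ A B
        map_smul' := fun c A => map_smul _ c A }
    exact L.continuous_of_finiteDimensional
  exact continuous_norm.comp this

noncomputable local instance {m k : ℕ} : MeasurableSpace (Matrix (Fin m) (Fin k) ℂ) :=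
  inferInstanceAs (MeasurableSpace (Fin m → Fin k → ℂ))
local instance {m k : ℕ} : SecondCountableTopology (Matrix (Fin m) (Fin k) ℂ) :=
  inferInstanceAs (SecondCountableTopology (Fin m → Fin k → ℂ))
local instance {m k : ℕ} : BorelSpace (Matrix (Fin m) (Fin k) ℂ) :=
  inferInstanceAs (BorelSpace (Fin m → Fin k → ℂ))

variable {n : ℕ} {Wp : ℝ → Matrix (Fin n) (Fin n) ℂ}

lemma meas_matrix (hW : ∀ i j, Measurable fun x => Wp x i j) : Measurable Wp :=
  measurable_pi_lambda _ fun i => measurable_pi_lambda _ fun j => hW i j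

lemma meas_inv (hW : ∀ i j, Measurable fun x => Wp x i j) :
    Measurable fun x => (Wp x)⁻¹ := by
  have hdet : Measurable fun x => (Wp x).det :=
    (Continuous.matrix_det continuous_id).measurable.comp (meas_matrix hW)
  have hadj : Measurable fun x => (Wp x).adjugate :=
    (Continuous.matrix_adjugate continuous_id).measurable.comp (meas_matrix hW)
  have : (fun x => (Wp x)⁻¹) = fun x => Ring.inverse (Wp x).det • (Wp x).adjugate := by
    ext x i j; rw [Matrix.inv_def]
  rw [this]
  refine measurable_pi_lambda _ fun i => measurable_pi_lambda _ fun j => ?_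
  have h1 : Measurable fun x => Ring.inverse (Wp x).det := by
    rw [Ring.inverse_eq_inv']
    exact hdet.inv
  have h2 : Measurable fun x => (Wp x).adjugate i j := by
    have hc : Continuous fun M : Matrix (Fin n) (Fin n) ℂ => M i j :=
      (continuous_apply j).comp (continuous_apply i)
    exact hc.measurable.comp hadj
  exact (h1.mul h2 : Measurable fun x => Ring.inverse (Wp x).det * (Wp x).adjugate i j)

lemma eN_continuous (n : ℕ) : Continuous (eN (n := n)) := by
  refine Real.continuous_sqrt.comp (continuous_finset_sum _ fun i _ => ?_)
  exact ((continuous_apply i).norm).pow 2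

lemma meas_g (hW : ∀ i j, Measurable fun x => Wp x i j) (f : Fin n → ℂ) :
    Measurable fun x => ENNReal.ofReal (eN ((Wp x).mulVec f)) := by
  refine ENNReal.measurable_ofReal.comp ?_
  refine (eN_continuous n).measurable.comp ?_
  refine measurable_pi_lambda _ fun i => ?_
  simp only [Matrix.mulVec, dotProduct]
  exact Finset.measurable_sum _ fun j _ => (hW i j).mul measurable_const

lemma meas_K (hW : ∀ i j, Measurable fun x => Wp x i j) :
    Measurable fun q : ℝ × ℝ => ENNReal.ofReal (opN (Wp q.1 * (Wp q.2)⁻¹)) := by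
  have hm : Measurable fun q : ℝ × ℝ => Wp q.1 * (Wp q.2)⁻¹ := by
    have h1 : Measurable fun q : ℝ × ℝ => (Wp q.1, (Wp q.2)⁻¹) :=
      ((meas_matrix hW).comp measurable_fst).prodMk ((meas_inv hW).comp measurable_snd)
    have h2 : Continuous fun ab : Matrix (Fin n) (Fin n) ℂ × Matrix (Fin n) (Fin n) ℂ =>
        ab.1 * ab.2 := Continuous.matrix_mul continuous_fst continuous_snd
    exact h2.measurable.comp h1
  exact ENNReal.measurable_ofReal.comp ((opN_continuous n).measurable.comp hm)

lemma meas_w (hW : ∀ i j, Measurable fun x => Wp x i j) (A : Matrix (Fin n) (Fin n) ℂ) :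
    Measurable fun x => ENNReal.ofReal (opN (A * Wp x)) := by
  have hm : Measurable fun x => A * Wp x := by
    have h2 : Continuous fun B : Matrix (Fin n) (Fin n) ℂ => A * B :=
      Continuous.matrix_mul continuous_const continuous_id
    exact h2.measurable.comp (meas_matrix hW)
  exact ENNReal.measurable_ofReal.comp ((opN_continuous n).measurable.comp hm)


lemma rpow_ne_zero' {x : ℝ≥0∞} {y : ℝ} (hx : x ≠ 0) (hxt : x ≠ ⊤) : x ^ y ≠ 0 := by
  rw [Ne, ENNReal.rpow_eq_zero_iff]
  push_neg
  exact ⟨fun h => absurd h hx, fun h => absurd h hxt⟩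

lemma core {n : ℕ} {p q : ℝ} (hpq : p.HolderConjugate q)
    {Wp : ℝ → Matrix (Fin n) (Fin n) ℂ}
    (hWmeas : ∀ i j, Measurable fun x => Wp x i j)
    (hWpos : ∀ᵐ x : ℝ, (Wp x).PosDef)
    {CAp c₂ : ℝ} (hc₂ : 0 < c₂)
    (f : Fin n → ℂ)
    {a b α β : ℝ} (hab : a < b) (hαa : α ≤ a) (hbβ : b ≤ β)
    (hApJ : ∫⁻ x in Set.Icc α β,
        ((ENNReal.ofReal (β - α))⁻¹ * ∫⁻ s in Set.Icc α β,
          (ENNReal.ofReal (opN (Wp x * (Wp s)⁻¹))) ^ q) ^ (p - 1)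
        ≤ ENNReal.ofReal (β - α) * ENNReal.ofReal CAp)
    (hupper : ∫⁻ x in Set.Icc a b, (ENNReal.ofReal (eN ((Wp x).mulVec f))) ^ p
        ≤ ENNReal.ofReal (b - a) * ENNReal.ofReal c₂ ^ p)
    (hfpos : ∀ᵐ x : ℝ, 0 < eN ((Wp x).mulVec f)) :
    ∫⁻ t in Set.Icc α β, ENNReal.ofReal (eN ((Wp t).mulVec f)) ≤
      ENNReal.ofReal (β - α) ^ (1 + 1/q) * ENNReal.ofReal CAp ^ (1/p) *
        ENNReal.ofReal c₂ * (ENNReal.ofReal (b - a) ^ (1/q))⁻¹ := by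
  have hp1 : 1 < p := hpq.lt
  have hp0 : 0 < p := hpq.pos
  have hq0 : 0 < q := hpq.symm.pos
  have hconj : 1/p + 1/q = 1 := by
    have := hpq.inv_add_inv_eq_one; rw [one_div, one_div]; exact this
  have hba : (0:ℝ) < b - a := by linarith
  have hβα : (0:ℝ) < β - α := by linarith
  set g : ℝ → ℝ≥0∞ := fun x => ENNReal.ofReal (eN ((Wp x).mulVec f)) with hg
  set K : ℝ → ℝ → ℝ≥0∞ := fun t s => ENNReal.ofReal (opN (Wp t * (Wp s)⁻¹)) with hK
  set LI : ℝ≥0∞ := ENNReal.ofReal (b - a) with hLI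
  set LJ : ℝ≥0∞ := ENNReal.ofReal (β - α) with hLJ
  have hLI0 : LI ≠ 0 := by simp only [hLI, Ne, ENNReal.ofReal_eq_zero, not_le]; linarith
  have hLIt : LI ≠ ⊤ := ENNReal.ofReal_ne_top
  have hLJ0 : LJ ≠ 0 := by simp only [hLJ, Ne, ENNReal.ofReal_eq_zero, not_le]; linarith
  have hLJt : LJ ≠ ⊤ := ENNReal.ofReal_ne_top
  have hIJ : Set.Icc a b ⊆ Set.Icc α β := Set.Icc_subset_Icc hαa hbβ
  have hgm : Measurable g := meas_g hWmeas f
  have hgt : ∀ x, g x ≠ ⊤ := fun x => ENNReal.ofReal_ne_top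
  have hc₂0 : ENNReal.ofReal c₂ ≠ 0 := by
    simp only [Ne, ENNReal.ofReal_eq_zero, not_le]; linarith
  have hc₂t : ENNReal.ofReal c₂ ≠ ⊤ := ENNReal.ofReal_ne_top
  -- Step 1 : lower bound involving G_I := ∫_I (g^q)⁻¹
  set GI : ℝ≥0∞ := ∫⁻ s in Set.Icc a b, (g s ^ q)⁻¹ with hGI
  have hIvol : (∫⁻ _ in Set.Icc a b, (1:ℝ≥0∞)) = LI := by
    rw [setLIntegral_one, Real.volume_Icc]
  have hmul1 : (∫⁻ _ in Set.Icc a b, (1:ℝ≥0∞)) = ∫⁻ s in Set.Icc a b, g s * (g s)⁻¹ := by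
    refine lintegral_congr_ae (ae_restrict_of_ae (hfpos.mono fun s hs => ?_))
    have h0 : g s ≠ 0 := by
      simp only [hg, Ne, ENNReal.ofReal_eq_zero, not_le]; exact hs
    show (1:ℝ≥0∞) = g s * (g s)⁻¹
    rw [ENNReal.mul_inv_cancel h0 ENNReal.ofReal_ne_top]
  have hHold1 : ∫⁻ s in Set.Icc a b, g s * (g s)⁻¹ ≤
      (∫⁻ s in Set.Icc a b, g s ^ p) ^ (1/p) * GI ^ (1/q) := by
    have h := ENNReal.lintegral_mul_le_Lp_mul_Lq (volume.restrict (Set.Icc a b)) hpq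
      hgm.aemeasurable hgm.inv.aemeasurable
    simp only [Pi.mul_apply, Pi.inv_apply] at h
    have e0 : (∫⁻ s in Set.Icc a b, ((g s)⁻¹) ^ q) = GI :=
      lintegral_congr fun s => ENNReal.inv_rpow _ _
    rw [e0] at h
    exact h
  have hLIle : LI ≤ LI ^ (1/p) * ENNReal.ofReal c₂ * GI ^ (1/q) := by
    have h2 : (∫⁻ s in Set.Icc a b, g s ^ p) ^ (1/p) ≤ LI ^ (1/p) * ENNReal.ofReal c₂ := by
      calc (∫⁻ s in Set.Icc a b, g s ^ p) ^ (1/p)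
          ≤ (LI * ENNReal.ofReal c₂ ^ p) ^ (1/p) :=
            ENNReal.rpow_le_rpow hupper (by positivity)
      _ = LI ^ (1/p) * (ENNReal.ofReal c₂ ^ p) ^ (1/p) :=
            ENNReal.mul_rpow_of_nonneg _ _ (by positivity)
      _ = LI ^ (1/p) * ENNReal.ofReal c₂ := by
            rw [← ENNReal.rpow_mul, mul_one_div_cancel hp0.ne', ENNReal.rpow_one]
    calc LI = ∫⁻ s in Set.Icc a b, g s * (g s)⁻¹ := by rw [← hIvol, hmul1]
    _ ≤ (∫⁻ s in Set.Icc a b, g s ^ p) ^ (1/p) * GI ^ (1/q) := hHold1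
    _ ≤ LI ^ (1/p) * ENNReal.ofReal c₂ * GI ^ (1/q) := mul_le_mul_left h2 _
  set γ : ℝ≥0∞ := LI ^ (1/q) * (ENNReal.ofReal c₂)⁻¹ with hγ
  have hLIp0 : LI ^ (1/p) ≠ 0 := rpow_ne_zero' hLI0 hLIt
  have hLIpt : LI ^ (1/p) ≠ ⊤ := ENNReal.rpow_ne_top_of_nonneg (by positivity) hLIt
  have hγGI : γ ≤ GI ^ (1/q) := by
    have h3 : LI ^ (1/q) ≤ ENNReal.ofReal c₂ * GI ^ (1/q) := by
      have h4 : LI ^ (1/p) * LI ^ (1/q) ≤ LI ^ (1/p) * (ENNReal.ofReal c₂ * GI ^ (1/q)) := by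
        rw [← ENNReal.rpow_add _ _ hLI0 hLIt, hconj, ENNReal.rpow_one, ← mul_assoc]
        exact hLIle
      exact (ENNReal.mul_le_mul_iff_right hLIp0 hLIpt).mp h4
    have h5 : LI ^ (1/q) * (ENNReal.ofReal c₂)⁻¹ ≤
        ENNReal.ofReal c₂ * GI ^ (1/q) * (ENNReal.ofReal c₂)⁻¹ := mul_le_mul_left h3 _
    rw [mul_comm (ENNReal.ofReal c₂), mul_assoc,
      ENNReal.mul_inv_cancel hc₂0 hc₂t, mul_one] at h5
    exact h5
  have hγt : γ ≠ ⊤ := ENNReal.mul_ne_top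
    (ENNReal.rpow_ne_top_of_nonneg (by positivity) hLIt) (ENNReal.inv_ne_top.mpr hc₂0)
  have hγ0 : γ ≠ 0 :=
    mul_ne_zero (rpow_ne_zero' hLI0 hLIt) (ENNReal.inv_ne_zero.mpr hc₂t)
  -- Step 2 : pointwise estimate
  set Z : ℝ → ℝ≥0∞ := fun t => ∫⁻ s in Set.Icc α β, K t s ^ q with hZ
  have hpt : ∀ t, g t * γ ≤ Z t ^ (1/q) := by
    intro t
    have h1 : g t ^ q * GI ≤ Z t := by
      have e1 : g t ^ q * GI = ∫⁻ s in Set.Icc a b, g t ^ q * (g s ^ q)⁻¹ :=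
        (lintegral_const_mul' _ _ (ENNReal.rpow_ne_top_of_nonneg hq0.le (hgt t))).symm
      rw [e1]
      calc ∫⁻ s in Set.Icc a b, g t ^ q * (g s ^ q)⁻¹
          ≤ ∫⁻ s in Set.Icc a b, K t s ^ q := by
            refine lintegral_mono_ae (ae_restrict_of_ae (((hWpos.and hfpos).mono
              (fun s hs => ?_))))
            obtain ⟨hspos, hgs⟩ := hs
            have hdet : IsUnit (Wp s).det := isUnit_iff_ne_zero.2 (ne_of_gt hspos.det_pos)
            have hkey : (Wp t).mulVec f = (Wp t * (Wp s)⁻¹).mulVec ((Wp s).mulVec f) := by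
              rw [Matrix.mulVec_mulVec, mul_assoc, Matrix.nonsing_inv_mul _ hdet, mul_one]
            have h5 : g t ≤ K t s * g s := by
              rw [hg, hK]
              calc ENNReal.ofReal (eN ((Wp t).mulVec f))
                  ≤ ENNReal.ofReal (opN (Wp t * (Wp s)⁻¹) * eN ((Wp s).mulVec f)) := by
                    refine ENNReal.ofReal_le_ofReal ?_
                    rw [hkey]
                    exact eN_mulVec_le _ _
              _ = _ := ENNReal.ofReal_mul (opN_nonneg _)
            have h6 : g t ^ q ≤ K t s ^ q * g s ^ q := by
              calc g t ^ q ≤ (K t s * g s) ^ q := ENNReal.rpow_le_rpow h5 hq0.le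
              _ = K t s ^ q * g s ^ q := ENNReal.mul_rpow_of_nonneg _ _ hq0.le
            have hgs0 : g s ^ q ≠ 0 := by
              refine rpow_ne_zero' ?_ (hgt s)
              simp only [hg, Ne, ENNReal.ofReal_eq_zero, not_le]; exact hgs
            have hgst : g s ^ q ≠ ⊤ := ENNReal.rpow_ne_top_of_nonneg hq0.le (hgt s)
            calc g t ^ q * (g s ^ q)⁻¹
                ≤ K t s ^ q * g s ^ q * (g s ^ q)⁻¹ := mul_le_mul_left h6 _
            _ = K t s ^ q := by
                rw [mul_assoc, ENNReal.mul_inv_cancel hgs0 hgst, mul_one]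
      _ ≤ Z t := lintegral_mono_set hIJ
    calc g t * γ ≤ g t * GI ^ (1/q) := mul_le_mul_right hγGI _
    _ = (g t ^ q * GI) ^ (1/q) := by
        rw [ENNReal.mul_rpow_of_nonneg _ _ (by positivity), ← ENNReal.rpow_mul,
          mul_one_div_cancel hq0.ne', ENNReal.rpow_one]
    _ ≤ Z t ^ (1/q) := ENNReal.rpow_le_rpow h1 (by positivity)
  have hInt : (∫⁻ t in Set.Icc α β, g t) * γ ≤ ∫⁻ t in Set.Icc α β, Z t ^ (1/q) := by
    rw [← lintegral_mul_const' γ _ hγt]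
    exact lintegral_mono fun t => hpt t
  -- Step 3 : bound on ∫ Z^(1/q) via the A_p condition
  have hZm : Measurable Z := by
    have h7 : Measurable fun r : ℝ × ℝ => K r.1 r.2 ^ q := (meas_K hWmeas).pow_const q
    exact h7.lintegral_prod_right'
  have hq1q : (p - 1) * (1/p) = 1/q := by
    have h1q : 1/q = 1 - 1/p := by linarith
    rw [h1q]
    field_simp
  have hptZ : ∀ t, Z t ^ (1/q) = LJ ^ (1/q) * ((LJ⁻¹ * Z t) ^ (p - 1)) ^ (1/p) := by
    intro t
    rw [← ENNReal.rpow_mul, hq1q, ENNReal.mul_rpow_of_nonneg _ _ (by positivity),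
      ENNReal.inv_rpow, ← mul_assoc, ENNReal.mul_inv_cancel (rpow_ne_zero' hLJ0 hLJt)
        (ENNReal.rpow_ne_top_of_nonneg (by positivity) hLJt), one_mul]
  have hZbound : ∫⁻ t in Set.Icc α β, Z t ^ (1/q) ≤
      LJ ^ (1 + 1/q) * ENNReal.ofReal CAp ^ (1/p) := by
    have e2 : ∫⁻ t in Set.Icc α β, Z t ^ (1/q)
        = LJ ^ (1/q) * ∫⁻ t in Set.Icc α β, ((LJ⁻¹ * Z t) ^ (p - 1)) ^ (1/p) := by
      rw [← lintegral_const_mul' _ _ (ENNReal.rpow_ne_top_of_nonneg (by positivity) hLJt)]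
      exact lintegral_congr fun t => hptZ t
    have hm8 : Measurable fun t => ((LJ⁻¹ * Z t) ^ (p - 1)) ^ (1/p) :=
      ((hZm.const_mul _).pow_const _).pow_const _
    have h8 : ∫⁻ t in Set.Icc α β, ((LJ⁻¹ * Z t) ^ (p - 1)) ^ (1/p) ≤
        (∫⁻ t in Set.Icc α β, (LJ⁻¹ * Z t) ^ (p - 1)) ^ (1/p) * LJ ^ (1/q) := by
      have h := ENNReal.lintegral_mul_le_Lp_mul_Lq (volume.restrict (Set.Icc α β)) hpq
        hm8.aemeasurable (aemeasurable_const (b := (1:ℝ≥0∞)))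
      simp only [Pi.mul_apply, mul_one, ENNReal.one_rpow] at h
      calc ∫⁻ t in Set.Icc α β, ((LJ⁻¹ * Z t) ^ (p - 1)) ^ (1/p) ≤
          (∫⁻ t in Set.Icc α β, (((LJ⁻¹ * Z t) ^ (p - 1)) ^ (1/p)) ^ p) ^ (1/p) *
            (∫⁻ _ in Set.Icc α β, (1:ℝ≥0∞)) ^ (1/q) := h
      _ = _ := by
          rw [setLIntegral_one, Real.volume_Icc, ← hLJ]
          congr 2
          refine lintegral_congr fun t => ?_
          rw [← ENNReal.rpow_mul, one_div_mul_cancel hp0.ne', ENNReal.rpow_one]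
    calc ∫⁻ t in Set.Icc α β, Z t ^ (1/q)
        = LJ ^ (1/q) * ∫⁻ t in Set.Icc α β, ((LJ⁻¹ * Z t) ^ (p - 1)) ^ (1/p) := e2
    _ ≤ LJ ^ (1/q) * ((∫⁻ t in Set.Icc α β, (LJ⁻¹ * Z t) ^ (p - 1)) ^ (1/p) * LJ ^ (1/q)) :=
        mul_le_mul_right h8 _
    _ ≤ LJ ^ (1/q) * ((LJ * ENNReal.ofReal CAp) ^ (1/p) * LJ ^ (1/q)) := by
        refine mul_le_mul_right (mul_le_mul_left (ENNReal.rpow_le_rpow ?_ (by positivity)) _) _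
        exact hApJ
    _ = LJ ^ (1 + 1/q) * ENNReal.ofReal CAp ^ (1/p) := by
        rw [ENNReal.mul_rpow_of_nonneg _ _ (by positivity)]
        have : (1 : ℝ) + 1/q = 1/q + 1/p + 1/q := by linarith
        rw [this, ENNReal.rpow_add _ _ hLJ0 hLJt, ENNReal.rpow_add _ _ hLJ0 hLJt]
        ring
  -- Conclusion
  have hfinal : (∫⁻ t in Set.Icc α β, g t) * γ ≤
      LJ ^ (1 + 1/q) * ENNReal.ofReal CAp ^ (1/p) := hInt.trans hZbound
  have := (ENNReal.le_div_iff_mul_le (Or.inl hγ0) (Or.inl hγt)).mpr hfinal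
  refine this.trans ?_
  rw [div_eq_mul_inv, hγ, ENNReal.mul_inv (Or.inl (rpow_ne_zero' hLI0 hLIt))
    (Or.inr (ENNReal.inv_ne_zero.mpr hc₂t)), inv_inv]
  rw [mul_assoc, mul_assoc]
  exact le_of_eq (by ring)

lemma helper_ofReal {X1 X2 Y1 Y2 : ℝ} (h1 : 0 ≤ X1) (hy1 : 0 < Y1) (hy2 : 0 < Y2) :
    ENNReal.ofReal X1 * ENNReal.ofReal X2 * (ENNReal.ofReal Y1)⁻¹ * (ENNReal.ofReal Y2)⁻¹
      = ENNReal.ofReal (X1 * X2 / Y1 / Y2) := by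
  rw [ENNReal.ofReal_div_of_pos hy2, ENNReal.ofReal_div_of_pos hy1, ENNReal.ofReal_mul h1,
    div_eq_mul_inv, div_eq_mul_inv]

lemma sqrt_two_lt_two : Real.sqrt 2 < 2 := by
  nlinarith [Real.sq_sqrt (by norm_num : (0:ℝ) ≤ 2), Real.sqrt_nonneg 2]

lemma sqrt_pow' (x : ℝ) (hx : 0 ≤ x) (n : ℕ) : Real.sqrt (x ^ n) = Real.sqrt x ^ n := by
  rw [Real.sqrt_eq_rpow, Real.sqrt_eq_rpow, ← Real.rpow_natCast (x ^ (1/2 : ℝ)) n,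
    ← Real.rpow_natCast x n, ← Real.rpow_mul hx, ← Real.rpow_mul hx, mul_comm]

lemma kbound {L q : ℝ} (hL : 0 < L) (hq0 : 0 < q) (hq12 : 1/q ≤ 1/2) (k : ℕ) :
    L * (2^(k+1) * L)^(1+1/q) / L^(1/q) / (2^k * (L/2))^2
      ≤ (8 * Real.sqrt 2) * (Real.sqrt 2 / 2)^k := by
  have hN0 : (0:ℝ) < 2^(k+1) := by positivity
  have hN1 : (1:ℝ) ≤ 2^(k+1) := one_le_pow₀ one_le_two
  have h1 : ((2:ℝ)^(k+1) * L)^(1+1/q) = ((2:ℝ)^(k+1))^(1+1/q) * L^(1+1/q) :=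
    Real.mul_rpow hN0.le hL.le
  have h2 : L^(1+1/q) = L * L^(1/q) := by
    rw [Real.rpow_add hL, Real.rpow_one]
  have h3 : ((2:ℝ)^(k+1))^(1+1/q) ≤ ((2:ℝ)^(k+1))^(3/2 : ℝ) :=
    Real.rpow_le_rpow_of_exponent_le hN1 (by linarith)
  have h4 : ((2:ℝ)^(k+1))^(3/2:ℝ) = 2^(k+1) * Real.sqrt 2 ^ (k+1) := by
    rw [show (3/2:ℝ) = 1 + 1/2 by norm_num, Real.rpow_add hN0, Real.rpow_one,
      ← Real.sqrt_eq_rpow, sqrt_pow' 2 (by norm_num)]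
  have hu0 : (0:ℝ) < L^(1/q) := Real.rpow_pos_of_pos hL _
  have h2k : ((2:ℝ)^k)^2 = 4^k := by
    rw [← pow_mul, mul_comm, pow_mul]; norm_num
  have h44 : (4:ℝ)^k = 2^k * 2^k := by rw [← mul_pow]; norm_num
  have hmain : L * (2^(k+1) * L)^(1+1/q) / L^(1/q) / (2^k * (L/2))^2
      = ((2:ℝ)^(k+1))^(1+1/q) * (4 / 4^k) := by
    rw [h1, h2, ← h2k]
    field_simp
    ring
  rw [hmain]
  have hstep : ((2:ℝ)^(k+1))^(1+1/q) * (4 / 4^k) ≤ (2^(k+1) * Real.sqrt 2 ^ (k+1)) * (4 / 4^k) := by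
    refine mul_le_mul_of_nonneg_right (h3.trans_eq h4) (by positivity)
  refine hstep.trans (le_of_eq ?_)
  rw [pow_succ, pow_succ, div_pow, h44]
  have h2ne : ((2:ℝ)^k) ≠ 0 := by positivity
  field_simp
  ring
lemma annuli_cover (a b : ℝ) (hab : a < b) :
    (Set.Icc a b)ᶜ ⊆ ⋃ k : ℕ,
      (Set.Icc ((a+b)/2 - 2^(k+1)*((b-a)/2)) ((a+b)/2 + 2^(k+1)*((b-a)/2)) \
       Set.Icc ((a+b)/2 - 2^k*((b-a)/2)) ((a+b)/2 + 2^k*((b-a)/2))) := by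
  classical
  intro t ht
  have hL : (0:ℝ) < (b-a)/2 := by linarith
  have hmem : ∀ m : ℕ, t ∈ Set.Icc ((a+b)/2 - 2^m*((b-a)/2)) ((a+b)/2 + 2^m*((b-a)/2))
      ↔ |t - (a+b)/2| ≤ 2^m*((b-a)/2) := by
    intro m
    rw [Set.mem_Icc, abs_le]
    constructor <;> intro h <;> constructor <;> linarith [h.1, h.2]
  have hex : ∃ m : ℕ, t ∈ Set.Icc ((a+b)/2 - 2^m*((b-a)/2)) ((a+b)/2 + 2^m*((b-a)/2)) := by
    obtain ⟨m, hm⟩ := pow_unbounded_of_one_lt (|t - (a+b)/2| / ((b-a)/2)) (one_lt_two (α := ℝ))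
    exact ⟨m, (hmem m).2 (by rw [div_lt_iff₀ hL] at hm; linarith)⟩
  set m := Nat.find hex with hmdef
  have hm : t ∈ Set.Icc ((a+b)/2 - 2^m*((b-a)/2)) ((a+b)/2 + 2^m*((b-a)/2)) := Nat.find_spec hex
  have hm0 : m ≠ 0 := by
    intro h0
    apply ht
    have := hm
    rw [h0] at this
    rw [Set.mem_Icc] at this ⊢
    rw [pow_zero] at this
    constructor <;> [linarith [this.1]; linarith [this.2]]
  obtain ⟨k, hk⟩ : ∃ k, m = k + 1 := ⟨m - 1, (Nat.succ_pred_eq_of_pos (Nat.pos_of_ne_zero hm0)).symm⟩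
  refine Set.mem_iUnion.2 ⟨k, ?_, ?_⟩
  · rw [← hk]; exact hm
  · exact Nat.find_min hex (by omega)
end B2p

open B2p

theorem stmt10 (n : ℕ) (p : ℝ) (hp1 : 1 < p) (hp2 : p ≤ 2)
    (Wp : ℝ → Matrix (Fin n) (Fin n) ℂ)
    (hWmeas : ∀ i j, Measurable fun x => Wp x i j)
    (hWpos : ∀ᵐ x : ℝ, (Wp x).PosDef)
    (V : ℝ → ℝ → Matrix (Fin n) (Fin n) ℂ)
    (hVpos : ∀ a b : ℝ, a < b → (V a b).PosDef)
    (c₁ c₂ : ℝ) (hc₁ : 0 < c₁) (hc₂ : 0 < c₂)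
    (hred : ∀ a b : ℝ, a < b → ∀ e : Fin n → ℂ,
      ENNReal.ofReal (c₁ * eN ((V a b).mulVec e)) ≤
        ((ENNReal.ofReal (b - a))⁻¹ *
          ∫⁻ x in Set.Icc a b, ENNReal.ofReal (eN ((Wp x).mulVec e) ^ p)) ^ (1 / p) ∧
      ((ENNReal.ofReal (b - a))⁻¹ *
          ∫⁻ x in Set.Icc a b, ENNReal.ofReal (eN ((Wp x).mulVec e) ^ p)) ^ (1 / p) ≤
        ENNReal.ofReal (c₂ * eN ((V a b).mulVec e)))
    (CAp : ℝ)
    (hAp : ∀ a b : ℝ, a < b →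
      (ENNReal.ofReal (b - a))⁻¹ *
        ∫⁻ x in Set.Icc a b,
          ((ENNReal.ofReal (b - a))⁻¹ *
            ∫⁻ t in Set.Icc a b,
              ENNReal.ofReal (opN (Wp x * (Wp t)⁻¹) ^ (p / (p - 1)))) ^ (p / (p / (p - 1)))
        ≤ ENNReal.ofReal CAp) :
    ∃ C : ℝ, ∀ a b : ℝ, a < b →
      ENNReal.ofReal (b - a) *
          ∫⁻ t in (Set.Icc a b)ᶜ,
            ENNReal.ofReal (opN ((V a b)⁻¹ * Wp t) / (t - (a + b) / 2) ^ 2) ≤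
        ENNReal.ofReal C := by
  classical
  have hp0 : 0 < p := lt_trans zero_lt_one hp1
  have hpne : p ≠ 0 := hp0.ne'
  have hp1ne : p - 1 ≠ 0 := by intro h; apply absurd hp1; simp; linarith
  have hpq : p.HolderConjugate (p / (p - 1)) :=
    (Real.holderConjugate_iff_eq_conjExponent hp1).mpr rfl
  have hq0 : 0 < p / (p - 1) := hpq.symm.pos
  have hq12 : 1 / (p / (p - 1)) ≤ 1/2 := by
    rw [one_div_div, div_le_div_iff₀ hp0 (by norm_num)]
    linarith
  have hexp : p / (p / (p - 1)) = p - 1 := by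
    field_simp
  -- the uniform constant
  set rE : ℝ≥0∞ := ENNReal.ofReal (Real.sqrt 2 / 2) with hrE
  set M : ℝ≥0∞ := (n : ℝ≥0∞) * ENNReal.ofReal CAp ^ (1/p) * ENNReal.ofReal c₂ *
      ENNReal.ofReal (8 * Real.sqrt 2) with hM
  set T : ℝ≥0∞ := M * (1 - rE)⁻¹ with hT
  have hrlt : rE < 1 := by
    rw [hrE, ENNReal.ofReal_lt_one]
    linarith [sqrt_two_lt_two]
  have hMt : M ≠ ⊤ := by
    refine ENNReal.mul_ne_top (ENNReal.mul_ne_top (ENNReal.mul_ne_top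
      (ENNReal.natCast_ne_top n) ?_) ENNReal.ofReal_ne_top) ENNReal.ofReal_ne_top
    exact ENNReal.rpow_ne_top_of_nonneg (by positivity) ENNReal.ofReal_ne_top
  have hTt : T ≠ ⊤ := by
    refine ENNReal.mul_ne_top hMt (ENNReal.inv_ne_top.mpr ?_)
    exact ne_of_gt (tsub_pos_of_lt hrlt)
  refine ⟨T.toReal, ?_⟩
  intro a b hab
  rw [ENNReal.ofReal_toReal hTt]
  have hL : (0:ℝ) < b - a := by linarith
  have hLI0 : ENNReal.ofReal (b - a) ≠ 0 := by
    simp only [Ne, ENNReal.ofReal_eq_zero, not_le]; linarith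
  have hLIt : ENNReal.ofReal (b - a) ≠ ⊤ := ENNReal.ofReal_ne_top
  -- reducing operator vectors
  have hVdet : IsUnit (V a b).det := isUnit_iff_ne_zero.2 (ne_of_gt (hVpos a b hab).det_pos)
  set f : Fin n → Fin n → ℂ := fun j => (V a b)⁻¹.mulVec (Pi.single j 1) with hf
  have hVf : ∀ j, (V a b).mulVec (f j) = Pi.single j 1 := fun j => by
    rw [hf, Matrix.mulVec_mulVec, Matrix.mul_nonsing_inv _ hVdet, Matrix.one_mulVec]
  have hfj0 : ∀ j, f j ≠ 0 := by
    intro j h0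
    have := hVf j
    rw [h0, Matrix.mulVec_zero] at this
    have h1 := congrFun this j
    rw [Pi.single_eq_same] at h1
    exact one_ne_zero h1.symm
  have hfpos : ∀ j, ∀ᵐ x : ℝ, 0 < eN ((Wp x).mulVec (f j)) := fun j =>
    hWpos.mono fun x hx => eN_pos (mulVec_ne_zero hx (hfj0 j))
  have hupper : ∀ j, ∫⁻ x in Set.Icc a b, (ENNReal.ofReal (eN ((Wp x).mulVec (f j)))) ^ p
      ≤ ENNReal.ofReal (b - a) * ENNReal.ofReal c₂ ^ p := by
    intro j
    have h := (hred a b hab (f j)).2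
    rw [hVf j, eN_single, mul_one] at h
    have h2 := ENNReal.rpow_le_rpow h hp0.le
    rw [← ENNReal.rpow_mul, one_div_mul_cancel hpne, ENNReal.rpow_one] at h2
    have h3 : (∫⁻ x in Set.Icc a b, ENNReal.ofReal (eN ((Wp x).mulVec (f j)) ^ p))
        ≤ ENNReal.ofReal (b - a) * ENNReal.ofReal c₂ ^ p := by
      calc (∫⁻ x in Set.Icc a b, ENNReal.ofReal (eN ((Wp x).mulVec (f j)) ^ p))
          = ENNReal.ofReal (b - a) * ((ENNReal.ofReal (b - a))⁻¹ *
            ∫⁻ x in Set.Icc a b, ENNReal.ofReal (eN ((Wp x).mulVec (f j)) ^ p)) := by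
            rw [← mul_assoc, ENNReal.mul_inv_cancel hLI0 hLIt, one_mul]
      _ ≤ ENNReal.ofReal (b - a) * ENNReal.ofReal c₂ ^ p := mul_le_mul_right h2 _
    refine le_trans (le_of_eq (lintegral_congr fun x => ?_)) h3
    exact ENNReal.ofReal_rpow_of_nonneg (eN_nonneg _) hp0.le
  -- A_p hypothesis in the form needed for `core`
  have hApJ : ∀ α β : ℝ, α < β → ∫⁻ x in Set.Icc α β,
      ((ENNReal.ofReal (β - α))⁻¹ * ∫⁻ s in Set.Icc α β,
        (ENNReal.ofReal (opN (Wp x * (Wp s)⁻¹))) ^ (p / (p - 1))) ^ (p - 1)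
      ≤ ENNReal.ofReal (β - α) * ENNReal.ofReal CAp := by
    intro α β hαβ
    have hJ0 : ENNReal.ofReal (β - α) ≠ 0 := by
      simp only [Ne, ENNReal.ofReal_eq_zero, not_le]; linarith
    have h := hAp α β hαβ
    rw [hexp] at h
    have he : ∀ x : ℝ, (∫⁻ s in Set.Icc α β,
        ENNReal.ofReal (opN (Wp x * (Wp s)⁻¹) ^ (p / (p - 1)))) =
        ∫⁻ s in Set.Icc α β, (ENNReal.ofReal (opN (Wp x * (Wp s)⁻¹))) ^ (p / (p - 1)) :=
      fun x => lintegral_congr fun s =>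
        (ENNReal.ofReal_rpow_of_nonneg (opN_nonneg _) hq0.le).symm
    simp only [he] at h
    calc (∫⁻ x in Set.Icc α β, ((ENNReal.ofReal (β - α))⁻¹ * ∫⁻ s in Set.Icc α β,
          (ENNReal.ofReal (opN (Wp x * (Wp s)⁻¹))) ^ (p / (p - 1))) ^ (p - 1))
        = ENNReal.ofReal (β - α) * ((ENNReal.ofReal (β - α))⁻¹ *
          ∫⁻ x in Set.Icc α β, ((ENNReal.ofReal (β - α))⁻¹ * ∫⁻ s in Set.Icc α β,
          (ENNReal.ofReal (opN (Wp x * (Wp s)⁻¹))) ^ (p / (p - 1))) ^ (p - 1)) := by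
          rw [← mul_assoc, ENNReal.mul_inv_cancel hJ0 ENNReal.ofReal_ne_top, one_mul]
    _ ≤ ENNReal.ofReal (β - α) * ENNReal.ofReal CAp := mul_le_mul_right h _
  -- the dyadic dilates
  have h2k1 : ∀ k : ℕ, (1:ℝ) ≤ 2 ^ k := fun k => one_le_pow₀ one_le_two
  have hαa : ∀ k : ℕ, (a+b)/2 - 2^(k+1)*((b-a)/2) ≤ a := by
    intro k
    nlinarith [h2k1 (k+1), hL]
  have hbβ : ∀ k : ℕ, b ≤ (a+b)/2 + 2^(k+1)*((b-a)/2) := by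
    intro k
    nlinarith [h2k1 (k+1), hL]
  have hαβ : ∀ k : ℕ, (a+b)/2 - 2^(k+1)*((b-a)/2) < (a+b)/2 + 2^(k+1)*((b-a)/2) := by
    intro k
    nlinarith [h2k1 (k+1), hL]
  -- pointwise domination of the operator norm by the column sums
  have hwsum : ∀ᵐ t : ℝ, ENNReal.ofReal (opN ((V a b)⁻¹ * Wp t)) ≤
      ∑ j, ENNReal.ofReal (eN ((Wp t).mulVec (f j))) := by
    refine hWpos.mono fun t htpos => ?_
    have he : (Wp t * (V a b)⁻¹).conjTranspose = (V a b)⁻¹ * Wp t := by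
      rw [Matrix.conjTranspose_mul, (hVpos a b hab).1.inv, htpos.1]
    have h1 : opN ((V a b)⁻¹ * Wp t) = opN (Wp t * (V a b)⁻¹) := by
      rw [← he, opN_conjTranspose]
    have h2 : opN (Wp t * (V a b)⁻¹) ≤ ∑ j, eN ((Wp t).mulVec (f j)) := by
      refine (opN_le_sum _).trans (le_of_eq ?_)
      refine Finset.sum_congr rfl fun j _ => ?_
      rw [hf, Matrix.mulVec_mulVec]
    calc ENNReal.ofReal (opN ((V a b)⁻¹ * Wp t))
        ≤ ENNReal.ofReal (∑ j, eN ((Wp t).mulVec (f j))) := by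
          refine ENNReal.ofReal_le_ofReal ?_
          rw [h1]; exact h2
    _ = ∑ j, ENNReal.ofReal (eN ((Wp t).mulVec (f j))) :=
        ENNReal.ofReal_sum_of_nonneg fun j _ => eN_nonneg _
  -- bound over the dilated interval, from `core`
  set Bk : ℕ → ℝ≥0∞ := fun k =>
    ENNReal.ofReal (((a+b)/2 + 2^(k+1)*((b-a)/2)) - ((a+b)/2 - 2^(k+1)*((b-a)/2)))
        ^ (1 + 1/(p/(p-1))) *
      ENNReal.ofReal CAp ^ (1/p) * ENNReal.ofReal c₂ *
      (ENNReal.ofReal (b - a) ^ (1/(p/(p-1))))⁻¹ with hBk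
  have hsum : ∀ k : ℕ, ∫⁻ t in Set.Icc ((a+b)/2 - 2^(k+1)*((b-a)/2))
      ((a+b)/2 + 2^(k+1)*((b-a)/2)), ENNReal.ofReal (opN ((V a b)⁻¹ * Wp t))
      ≤ (n : ℝ≥0∞) * Bk k := by
    intro k
    calc ∫⁻ t in Set.Icc ((a+b)/2 - 2^(k+1)*((b-a)/2)) ((a+b)/2 + 2^(k+1)*((b-a)/2)),
          ENNReal.ofReal (opN ((V a b)⁻¹ * Wp t))
        ≤ ∫⁻ t in Set.Icc ((a+b)/2 - 2^(k+1)*((b-a)/2)) ((a+b)/2 + 2^(k+1)*((b-a)/2)),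
          ∑ j, ENNReal.ofReal (eN ((Wp t).mulVec (f j))) :=
          lintegral_mono_ae (ae_restrict_of_ae hwsum)
    _ = ∑ j, ∫⁻ t in Set.Icc ((a+b)/2 - 2^(k+1)*((b-a)/2)) ((a+b)/2 + 2^(k+1)*((b-a)/2)),
          ENNReal.ofReal (eN ((Wp t).mulVec (f j))) :=
          lintegral_finset_sum _ fun j _ => meas_g hWmeas (f j)
    _ ≤ ∑ _j : Fin n, Bk k := by
          refine Finset.sum_le_sum fun j _ => ?_
          exact core hpq hWmeas hWpos hc₂ (f j) hab (hαa k) (hbβ k)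
            (hApJ _ _ (hαβ k)) (hupper j) (hfpos j)
    _ = (n : ℝ≥0∞) * Bk k := by
          rw [Finset.sum_const, Finset.card_univ, Fintype.card_fin, nsmul_eq_mul]
  -- per-annulus bound
  have hDk0 : ∀ k : ℕ, (0:ℝ) < (2^k*((b-a)/2))^2 := fun k => by positivity
  have hSk : ∀ k : ℕ,
      (∫⁻ t in Set.Icc ((a+b)/2 - 2^(k+1)*((b-a)/2)) ((a+b)/2 + 2^(k+1)*((b-a)/2)) \
          Set.Icc ((a+b)/2 - 2^k*((b-a)/2)) ((a+b)/2 + 2^k*((b-a)/2)),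
        ENNReal.ofReal (opN ((V a b)⁻¹ * Wp t) / (t - (a + b) / 2) ^ 2))
      ≤ ((n : ℝ≥0∞) * Bk k) * (ENNReal.ofReal ((2^k*((b-a)/2))^2))⁻¹ := by
    intro k
    have hinvt : (ENNReal.ofReal ((2^k*((b-a)/2))^2))⁻¹ ≠ ⊤ := by
      rw [ENNReal.inv_ne_top]
      simp only [Ne, ENNReal.ofReal_eq_zero, not_le]
      exact hDk0 k
    calc (∫⁻ t in Set.Icc ((a+b)/2 - 2^(k+1)*((b-a)/2)) ((a+b)/2 + 2^(k+1)*((b-a)/2)) \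
          Set.Icc ((a+b)/2 - 2^k*((b-a)/2)) ((a+b)/2 + 2^k*((b-a)/2)),
        ENNReal.ofReal (opN ((V a b)⁻¹ * Wp t) / (t - (a + b) / 2) ^ 2))
        ≤ ∫⁻ t in Set.Icc ((a+b)/2 - 2^(k+1)*((b-a)/2)) ((a+b)/2 + 2^(k+1)*((b-a)/2)) \
          Set.Icc ((a+b)/2 - 2^k*((b-a)/2)) ((a+b)/2 + 2^k*((b-a)/2)),
          ENNReal.ofReal (opN ((V a b)⁻¹ * Wp t)) *
            (ENNReal.ofReal ((2^k*((b-a)/2))^2))⁻¹ := by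
          refine setLIntegral_mono ((meas_w hWmeas _).mul_const _) fun t ht => ?_
          have habs : 2^k*((b-a)/2) ≤ |t - (a+b)/2| := by
            have ht2 := ht.2
            rw [Set.mem_Icc, not_and_or, not_le, not_le] at ht2
            rcases ht2 with h | h
            · rw [le_abs]; right; linarith
            · rw [le_abs]; left; linarith
          have hsq : (2^k*((b-a)/2))^2 ≤ (t - (a+b)/2)^2 := by
            rw [← sq_abs (t - (a+b)/2)]
            exact pow_le_pow_left₀ (by positivity) habs 2
          have hptw : opN ((V a b)⁻¹ * Wp t) / (t - (a + b) / 2) ^ 2 ≤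
              opN ((V a b)⁻¹ * Wp t) / (2^k*((b-a)/2))^2 := by
            rw [div_eq_mul_inv, div_eq_mul_inv]
            exact mul_le_mul_of_nonneg_left (inv_anti₀ (hDk0 k) hsq) (opN_nonneg _)
          calc ENNReal.ofReal (opN ((V a b)⁻¹ * Wp t) / (t - (a + b) / 2) ^ 2)
              ≤ ENNReal.ofReal (opN ((V a b)⁻¹ * Wp t) / (2^k*((b-a)/2))^2) :=
                ENNReal.ofReal_le_ofReal hptw
          _ = _ := by rw [ENNReal.ofReal_div_of_pos (hDk0 k), div_eq_mul_inv]
    _ = (∫⁻ t in Set.Icc ((a+b)/2 - 2^(k+1)*((b-a)/2)) ((a+b)/2 + 2^(k+1)*((b-a)/2)) \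
          Set.Icc ((a+b)/2 - 2^k*((b-a)/2)) ((a+b)/2 + 2^k*((b-a)/2)),
          ENNReal.ofReal (opN ((V a b)⁻¹ * Wp t))) *
            (ENNReal.ofReal ((2^k*((b-a)/2))^2))⁻¹ :=
          lintegral_mul_const' _ _ hinvt
    _ ≤ (∫⁻ t in Set.Icc ((a+b)/2 - 2^(k+1)*((b-a)/2)) ((a+b)/2 + 2^(k+1)*((b-a)/2)),
          ENNReal.ofReal (opN ((V a b)⁻¹ * Wp t))) *
            (ENNReal.ofReal ((2^k*((b-a)/2))^2))⁻¹ :=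
          mul_le_mul_left (lintegral_mono_set Set.diff_subset) _
    _ ≤ ((n : ℝ≥0∞) * Bk k) * (ENNReal.ofReal ((2^k*((b-a)/2))^2))⁻¹ :=
          mul_le_mul_left (hsum k) _
  -- the numeric bound for each annulus
  have hTerm : ∀ k : ℕ, ENNReal.ofReal (b - a) * (((n : ℝ≥0∞) * Bk k) *
      (ENNReal.ofReal ((2^k*((b-a)/2))^2))⁻¹) ≤ M * rE ^ k := by
    intro k
    have hdiff : ((a+b)/2 + 2^(k+1)*((b-a)/2)) - ((a+b)/2 - 2^(k+1)*((b-a)/2))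
        = 2^(k+1) * (b-a) := by ring
    have hBk' : Bk k = ENNReal.ofReal ((2^(k+1) * (b-a))^(1 + 1/(p/(p-1)))) *
        ENNReal.ofReal CAp ^ (1/p) * ENNReal.ofReal c₂ *
        (ENNReal.ofReal ((b - a)^(1/(p/(p-1)))))⁻¹ := by
      simp only [hBk]
      rw [hdiff,
        ENNReal.ofReal_rpow_of_nonneg (by positivity) (by positivity),
        ENNReal.ofReal_rpow_of_nonneg hL.le (by positivity)]
    rw [hBk']
    have heq : ENNReal.ofReal (b - a) * (((n : ℝ≥0∞) *
        (ENNReal.ofReal ((2^(k+1) * (b-a))^(1 + 1/(p/(p-1)))) *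
        ENNReal.ofReal CAp ^ (1/p) * ENNReal.ofReal c₂ *
        (ENNReal.ofReal ((b - a)^(1/(p/(p-1)))))⁻¹)) *
        (ENNReal.ofReal ((2^k*((b-a)/2))^2))⁻¹)
        = (n : ℝ≥0∞) * ENNReal.ofReal CAp ^ (1/p) * ENNReal.ofReal c₂ *
          (ENNReal.ofReal (b-a) * ENNReal.ofReal ((2^(k+1) * (b-a))^(1 + 1/(p/(p-1)))) *
           (ENNReal.ofReal ((b - a)^(1/(p/(p-1)))))⁻¹ *
           (ENNReal.ofReal ((2^k*((b-a)/2))^2))⁻¹) := by ring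
    rw [heq, helper_ofReal hL.le (Real.rpow_pos_of_pos hL _) (hDk0 k)]
    calc (n : ℝ≥0∞) * ENNReal.ofReal CAp ^ (1/p) * ENNReal.ofReal c₂ *
          ENNReal.ofReal ((b-a) * (2^(k+1) * (b-a))^(1 + 1/(p/(p-1))) /
            ((b - a)^(1/(p/(p-1)))) / ((2^k*((b-a)/2))^2))
        ≤ (n : ℝ≥0∞) * ENNReal.ofReal CAp ^ (1/p) * ENNReal.ofReal c₂ *
          ENNReal.ofReal ((8 * Real.sqrt 2) * (Real.sqrt 2 / 2)^k) :=
          mul_le_mul_right (ENNReal.ofReal_le_ofReal (kbound hL hq0 hq12 k)) _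
    _ = M * rE ^ k := by
        rw [ENNReal.ofReal_mul (by positivity),
          ENNReal.ofReal_pow (by positivity), hM, hrE]
        ring
  -- assemble
  calc ENNReal.ofReal (b - a) *
        ∫⁻ t in (Set.Icc a b)ᶜ,
          ENNReal.ofReal (opN ((V a b)⁻¹ * Wp t) / (t - (a + b) / 2) ^ 2)
      ≤ ENNReal.ofReal (b - a) * ∑' k : ℕ,
        ∫⁻ t in Set.Icc ((a+b)/2 - 2^(k+1)*((b-a)/2)) ((a+b)/2 + 2^(k+1)*((b-a)/2)) \
          Set.Icc ((a+b)/2 - 2^k*((b-a)/2)) ((a+b)/2 + 2^k*((b-a)/2)),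
          ENNReal.ofReal (opN ((V a b)⁻¹ * Wp t) / (t - (a + b) / 2) ^ 2) := by
        refine mul_le_mul_right ?_ _
        refine (lintegral_mono_set (annuli_cover a b hab)).trans ?_
        exact lintegral_iUnion_le _ _
  _ = ∑' k : ℕ, ENNReal.ofReal (b - a) *
        ∫⁻ t in Set.Icc ((a+b)/2 - 2^(k+1)*((b-a)/2)) ((a+b)/2 + 2^(k+1)*((b-a)/2)) \
          Set.Icc ((a+b)/2 - 2^k*((b-a)/2)) ((a+b)/2 + 2^k*((b-a)/2)),
          ENNReal.ofReal (opN ((V a b)⁻¹ * Wp t) / (t - (a + b) / 2) ^ 2) :=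
        ENNReal.tsum_mul_left.symm
  _ ≤ ∑' k : ℕ, M * rE ^ k :=
        ENNReal.tsum_le_tsum fun k => le_trans (mul_le_mul_right (hSk k) _) (hTerm k)
  _ = M * ∑' k : ℕ, rE ^ k := ENNReal.tsum_mul_left
  _ = T := by rw [ENNReal.tsum_geometric]
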